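/- arXiv:2005.07687 — 7 statements merged into one kernel-verified Lean document; each statement's English description precedes it below -/
import Mathlib

section
/- Let N be a finite group, let α be an automorphism of N, and let t ∈ N. If the set {n ∈ N : n·(n^α) = t} has cardinality strictly greater than 3|N|/4, then N is abelian, t = 1, and n^α = n^{-1} for all n ∈ N. -/
/-- A subgroup with more than half the elements is the whole group. -/
lemma aux_half_top {G : Type*} [Group G] [Fintype G] (H : Subgroup G)
    (h : Fintype.card G < 2 * Nat.card H) : H = ⊤ := by
  have hmul : Nat.card H * H.index = Nat.card G := Subgroup.card_mul_index H
  have hNG : Nat.card G = Fintype.card G := Nat.card_eq_fintype_card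
  by_contra hne
  have h1 : H.index ≠ 1 := fun h1 => hne (Subgroup.index_eq_one.mp h1)
  have h0 : H.index ≠ 0 := Subgroup.index_ne_zero_of_finite
  have h2 : 2 ≤ H.index := by omega
  have h3 : Nat.card H * 2 ≤ Nat.card H * H.index := Nat.mul_le_mul_left _ h2
  omega

/-- Card of subgroup as filter card -/
lemma aux_card_sub {G : Type*} [Group G] [Fintype G] [DecidableEq G] (H : Subgroup G)
    [DecidablePred (· ∈ H)] :
    Nat.card H = (Finset.univ.filter (· ∈ H)).card := by
  rw [Nat.card_eq_fintype_card]
  exact Fintype.card_subtype _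

theorem stmt3 {N : Type*} [Group N] [Fintype N] [DecidableEq N]
    (α : MulAut N) (t : N)
    (h : 3 * Fintype.card N < 4 * (Finset.univ.filter (fun n : N => n * α n = t)).card) :
    (∀ a b : N, a * b = b * a) ∧ t = 1 ∧ ∀ n : N, α n = n⁻¹ := by
  classical
  set S := Finset.univ.filter (fun n : N => n * α n = t) with hS
  have hSne : S.Nonempty := by
    rw [← Finset.card_pos]; omega
  obtain ⟨s, hs⟩ := hSne
  have hst : s * α s = t := (Finset.mem_filter.mp hs).2
  -- β x = α s * α x * (α s)⁻¹
  set β : MulAut N := α.trans (MulAut.conj (α s)) with hβ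
  have hβdef : ∀ x : N, β x = α s * α x * (α s)⁻¹ := fun x => rfl
  set I : Finset N := Finset.univ.filter (fun x : N => β x = x⁻¹) with hI
  -- map n ↦ s⁻¹ n sends S into I, injectively
  have hSI : S.card ≤ I.card := by
    have himg : S.image (fun n => s⁻¹ * n) ⊆ I := by
      intro x hx
      simp only [Finset.mem_image] at hx
      obtain ⟨n, hn, rfl⟩ := hx
      have hnt : n * α n = t := (Finset.mem_filter.mp hn).2
      simp only [hI, Finset.mem_filter, Finset.mem_univ, true_and]
      rw [hβdef]
      have : α n = n⁻¹ * t := by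
        rw [← hnt]; group
      rw [map_mul, map_inv, this, ← hst]
      group
    calc S.card = (S.image (fun n => s⁻¹ * n)).card := by
          rw [Finset.card_image_of_injective _ (mul_right_injective s⁻¹)]
      _ ≤ I.card := Finset.card_le_card himg
  have hIbig : 3 * Fintype.card N < 4 * I.card := lt_of_lt_of_le h (by omega)
  -- for a in I, things in I with a*x in I commute with a
  have key : ∀ a ∈ I, ∀ b : N, a * b = b * a := by
    intro a ha
    set J : Finset N := Finset.univ.filter (fun x : N => a * x ∈ I) with hJ
    have hJcard : J.card = I.card := by
      have : I.image (fun y => a⁻¹ * y) = J := by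
        ext x
        simp only [Finset.mem_image, hJ, Finset.mem_filter, Finset.mem_univ, true_and]
        constructor
        · rintro ⟨y, hy, rfl⟩; simpa using hy
        · intro hx; exact ⟨a * x, hx, by group⟩
      rw [← this, Finset.card_image_of_injective _ (mul_right_injective a⁻¹)]
    have hinter : Fintype.card N < 2 * (I ∩ J).card := by
      have h1 : (I ∩ J).card + (I ∪ J).card = I.card + J.card :=
        Finset.card_inter_add_card_union I J
      have h2 : (I ∪ J).card ≤ Fintype.card N := Finset.card_le_univ _
      omega
    -- everything in I ∩ J commutes with a
    have hcomm : ∀ x ∈ I ∩ J, a * x = x * a := by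
      intro x hx
      rw [Finset.mem_inter] at hx
      have hxI : β x = x⁻¹ := (Finset.mem_filter.mp hx.1).2
      have haI : β a = a⁻¹ := (Finset.mem_filter.mp ha).2
      have haxI : β (a * x) = (a * x)⁻¹ := (Finset.mem_filter.mp ((Finset.mem_filter.mp hx.2).2)).2
      rw [map_mul, hxI, haI, mul_inv_rev] at haxI
      have h2 : x * a = a * x := by simpa using congrArg (fun z => z⁻¹) haxI
      exact h2.symm
    -- centralizer of {a} is big hence top
    have hcent : Subgroup.centralizer {a} = ⊤ := by
      apply aux_half_top
      have hsub : I ∩ J ⊆ Finset.univ.filter (· ∈ Subgroup.centralizer {a}) := by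
        intro x hx
        simp only [Finset.mem_filter, Finset.mem_univ, true_and]
        rw [Subgroup.mem_centralizer_iff]
        intro g hg
        rw [Set.mem_singleton_iff] at hg
        subst hg
        exact hcomm x hx
      have := Finset.card_le_card hsub
      rw [aux_card_sub]
      omega
    intro b
    have hb : b ∈ Subgroup.centralizer {a} := hcent ▸ Subgroup.mem_top b
    exact Subgroup.mem_centralizer_iff.mp hb a rfl
  -- N abelian
  have hab : ∀ a b : N, a * b = b * a := by
    intro a b
    -- center is big
    have hcsub : I ⊆ Finset.univ.filter (· ∈ Subgroup.center N) := by
      intro x hx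
      simp only [Finset.mem_filter, Finset.mem_univ, true_and]
      rw [Subgroup.mem_center_iff]
      intro g
      exact (key x hx g).symm
    have hZtop : Subgroup.center N = ⊤ := by
      apply aux_half_top
      have := Finset.card_le_card hcsub
      rw [aux_card_sub]
      omega
    have : a ∈ Subgroup.center N := hZtop ▸ Subgroup.mem_top a
    exact (Subgroup.mem_center_iff.mp this b).symm
  -- the set where β x = x⁻¹ is a subgroup
  have hβall : ∀ x : N, β x = x⁻¹ := by
    set K : Subgroup N :=
      { carrier := {x : N | β x = x⁻¹}
        one_mem' := by simp
        mul_mem' := by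
          intro x y hx hy
          simp only [Set.mem_setOf_eq] at *
          rw [map_mul, hx, hy, mul_inv_rev, ← hab]
        inv_mem' := by
          intro x hx
          simp only [Set.mem_setOf_eq] at *
          rw [map_inv, hx, inv_inv] } with hK
    have hKtop : K = ⊤ := by
      apply aux_half_top
      have hsub : I ⊆ Finset.univ.filter (· ∈ K) := by
        intro x hx
        simp only [Finset.mem_filter, Finset.mem_univ, true_and]
        exact (Finset.mem_filter.mp hx).2
      have := Finset.card_le_card hsub
      rw [aux_card_sub]
      omega
    intro x
    have : x ∈ K := hKtop ▸ Subgroup.mem_top x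
    exact this
  have hαinv : ∀ n : N, α n = n⁻¹ := by
    intro n
    have := hβall n
    rw [hβdef] at this
    rw [mul_assoc, hab (α n) (α s)⁻¹, ← mul_assoc, mul_inv_cancel, one_mul] at this
    exact this
  refine ⟨hab, ?_, hαinv⟩
  rw [← hst, hαinv s, mul_inv_cancel]
end

section
/- Let N be a finite group, α an automorphism of N, and t ∈ N with t ≠ 1 and with {n ∈ N : n·(n^α) = t} of cardinality greater than 3|N|/4. Then t is a central element of N of order 2 and t^α = t. -/
lemma card_filter_comp_equiv {N : Type*} [Fintype N] [DecidableEq N] (e : N ≃ N)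
    (p : N → Prop) [DecidablePred p] :
    (Finset.univ.filter fun n => p (e n)).card = (Finset.univ.filter p).card := by
  rw [← Finset.card_image_of_injective (Finset.univ.filter fun n => p (e n)) e.injective]
  congr 1
  ext x
  simp only [Finset.mem_image, Finset.mem_filter, Finset.mem_univ, true_and]
  constructor
  · rintro ⟨y, hy, rfl⟩; exact hy
  · intro hx; exact ⟨e.symm x, by simpa using hx, by simp⟩

lemma inter_card_lb {N : Type*} [Fintype N] [DecidableEq N] (A B : Finset N) :
    A.card + B.card ≤ Fintype.card N + (A ∩ B).card := by
  have h1 := Finset.card_union_add_card_inter A B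
  have h2 : (A ∪ B).card ≤ Fintype.card N := by
    simpa using Finset.card_le_card (Finset.subset_univ (A ∪ B))
  omega

theorem stmt5 {N : Type*} [Group N] [Fintype N] [DecidableEq N]
    (α : MulAut N) (t : N) (ht : t ≠ 1)
    (h : 3 * Fintype.card N < 4 * (Finset.univ.filter (fun n : N => n * α n = t)).card) :
    t ∈ Subgroup.center N ∧ orderOf t = 2 ∧ α t = t := by
  classical
  set p : N → Prop := fun n => n * α n = t with hp
  set S : Finset N := Finset.univ.filter p with hSdef
  have hcardN : S.card ≤ Fintype.card N := by
    simpa using Finset.card_le_card (Finset.subset_univ S)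
  -- Step 1 : α t = t
  have hS1 : (Finset.univ.filter fun n => p ((α : N ≃ N) n)).card = S.card :=
    card_filter_comp_equiv (α : N ≃ N) p
  have hαt : α t = t := by
    have hinter := inter_card_lb S (Finset.univ.filter fun n => p ((α : N ≃ N) n))
    have hpos : 0 < (S ∩ Finset.univ.filter fun n => p ((α : N ≃ N) n)).card := by omega
    obtain ⟨n, hn⟩ := Finset.card_pos.mp hpos
    simp only [Finset.mem_inter, Finset.mem_filter, Finset.mem_univ, true_and, hSdef] at hn
    obtain ⟨hn1, hn2⟩ := hn
    simp only [hp] at hn1 hn2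
    calc α t = α (n * α n) := by rw [hn1]
    _ = α n * α (α n) := by rw [map_mul]
    _ = t := by simpa using hn2
  -- Step 2 : the set C of elements conjugating t to t⁻¹ has size > |N|/2
  have hS2 : (Finset.univ.filter fun n => p ((Equiv.mulRight t) n)).card = S.card :=
    card_filter_comp_equiv (Equiv.mulRight t) p
  set C : Finset N := S ∩ Finset.univ.filter fun n => p ((Equiv.mulRight t) n) with hCdef
  have hCcard : Fintype.card N < 2 * C.card := by
    have hinter := inter_card_lb S (Finset.univ.filter fun n => p ((Equiv.mulRight t) n))
    have hCc : C.card = (S ∩ Finset.univ.filter fun n => p ((Equiv.mulRight t) n)).card := by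
      rw [hCdef]
    omega
  have hCconj : ∀ n ∈ C, n * t * n⁻¹ = t⁻¹ := by
    intro n hn
    simp only [hCdef, Finset.mem_inter, Finset.mem_filter, Finset.mem_univ, true_and,
      hSdef, hp, Equiv.coe_mulRight] at hn
    obtain ⟨hn1, hn2⟩ := hn
    -- hn2 : (n*t) * α (n*t) = t
    have hαn : α n = n⁻¹ * t := by
      rw [← hn1]; group
    rw [map_mul, hαt, hαn] at hn2
    -- hn2 : n * t * (n⁻¹ * t * t) = t
    have : n * t * n⁻¹ * (t * t) = t := by
      calc n * t * n⁻¹ * (t * t) = n * t * (n⁻¹ * t * t) := by group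
      _ = t := hn2
    calc n * t * n⁻¹ = n * t * n⁻¹ * (t * t) * (t * t)⁻¹ := by group
    _ = t * (t*t)⁻¹ := by rw [this]
    _ = t⁻¹ := by group
  -- Step 3: the set D of elements commuting with t has size > |N|/2
  set D : Finset N := Finset.univ.filter fun g => g * t = t * g with hDdef
  have hCne : C.Nonempty := Finset.card_pos.mp (by omega)
  obtain ⟨x, hx⟩ := hCne
  have hDcard : C.card ≤ D.card := by
    apply Finset.card_le_card_of_injOn (fun y => x⁻¹ * y)
    · intro y hy
      simp only [hDdef, Finset.mem_coe, Finset.mem_filter, Finset.mem_univ, true_and]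
      have h1 := hCconj x hx
      have h2 := hCconj y hy
      have key : x * t * x⁻¹ = y * t * y⁻¹ := h1.trans h2.symm
      have : (x⁻¹ * y) * t * (x⁻¹ * y)⁻¹ = t := by
        calc (x⁻¹ * y) * t * (x⁻¹ * y)⁻¹ = x⁻¹ * (y * t * y⁻¹) * x := by group
        _ = x⁻¹ * (x * t * x⁻¹) * x := by rw [key]
        _ = t := by group
      calc x⁻¹ * y * t = (x⁻¹ * y) * t * (x⁻¹ * y)⁻¹ * (x⁻¹ * y) := by group
      _ = t * (x⁻¹ * y) := by rw [this]
    · intro a _ b _ hab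
      exact mul_left_cancel hab
  have hcomm : ∀ g : N, g * t = t * g := by
    intro g
    have himg : (D.image (fun d => g * d)).card = D.card :=
      Finset.card_image_of_injective D (mul_right_injective g)
    have hinter := inter_card_lb (D.image (fun d => g * d)) D
    have hpos : 0 < ((D.image (fun d => g * d)) ∩ D).card := by omega
    obtain ⟨e, he⟩ := Finset.card_pos.mp hpos
    simp only [Finset.mem_inter, Finset.mem_image] at he
    obtain ⟨⟨d, hd, rfl⟩, he2⟩ := he
    simp only [hDdef, Finset.mem_filter, Finset.mem_univ, true_and] at hd he2
    -- hd : d * t = t * d, he2 : (g*d) * t = t * (g*d)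
    have : g * (d * t) = t * g * d := by rw [← mul_assoc, he2]; group
    rw [hd] at this
    have : g * t = t * g * d * d⁻¹ := by
      rw [← this]; group
    rw [this]; group
  have htt : t * t = 1 := by
    have h1 := hCconj x hx
    have h2 := hcomm x
    -- x * t * x⁻¹ = t⁻¹ and x * t = t * x
    have : t = t⁻¹ := by
      rw [← h1, h2]; group
    nth_rewrite 2 [this]
    group
  refine ⟨Subgroup.mem_center_iff.mpr hcomm, ?_, hαt⟩
  have : t ^ 2 = 1 := by rw [pow_two, htt]
  exact orderOf_eq_prime this ht
end

section
/- Let X be a finite set and let f, g be permutations of X. Then either (1) the number of subsets S ⊆ X with |S ∩ S^f| = |S ∩ S^g| is at most (3/4)·2^{|X|}, or (2) there exists a subset I ⊆ X such that I is invariant under both f and g, f restricted to I equals g restricted to I, and f restricted to X∖I equals g^{-1} restricted to X∖I. -/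
open Finset

section Aux

variable {X : Type*} [Fintype X] [DecidableEq X]

/-- integer indicator of a proposition -/
private def chi (p : Prop) [Decidable p] : ℤ := if p then 1 else 0

private lemma chi_pos {p : Prop} [Decidable p] (h : p) : chi p = 1 := if_pos h
private lemma chi_neg {p : Prop} [Decidable p] (h : ¬ p) : chi p = 0 := if_neg h
private lemma chi_cases (p : Prop) [Decidable p] : chi p = 0 ∨ chi p = 1 := by
  unfold chi; split_ifs <;> simp
private lemma chi_eq_one {p : Prop} [Decidable p] (h : chi p = 1) : p := by
  by_contra hc; rw [chi_neg hc] at h; omega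

/-- the quadratic form -/
private def qf (f g : Equiv.Perm X) (S : Finset X) : ℤ :=
  ∑ u ∈ S, (chi (f u ∈ S) - chi (g u ∈ S))

/-- increment of `qf` upon inserting `x` -/
private def rr (f g : Equiv.Perm X) (x : X) (S : Finset X) : ℤ :=
  chi (f x ∈ insert x S) - chi (g x ∈ insert x S) +
    ∑ u ∈ S, (chi (f u = x) - chi (g u = x))

private lemma chi_insert {S : Finset X} {x : X} (hx : x ∉ S) (v : X) :
    chi (v ∈ insert x S) = chi (v = x) + chi (v ∈ S) := by
  unfold chi
  by_cases h : v = x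
  · subst h; simp [hx]
  · simp [h, Finset.mem_insert]

private lemma sum_chi_eq (S : Finset X) (v : X) : ∑ u ∈ S, chi (v = u) = chi (v ∈ S) := by
  simp [chi, Finset.sum_ite_eq]

private lemma inter_image_eq (f : Equiv.Perm X) (S : Finset X) :
    S ∩ S.image f = (S.filter fun u => f u ∈ S).image f := by
  ext v
  simp only [mem_inter, mem_image, mem_filter]
  constructor
  · rintro ⟨hv, u, hu, rfl⟩; exact ⟨u, ⟨hu, hv⟩, rfl⟩
  · rintro ⟨u, ⟨hu, hfu⟩, rfl⟩; exact ⟨hfu, u, hu, rfl⟩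

private lemma card_inter_image (f : Equiv.Perm X) (S : Finset X) :
    ((S ∩ S.image f).card : ℤ) = ∑ u ∈ S, chi (f u ∈ S) := by
  rw [inter_image_eq, card_image_of_injective _ f.injective, Finset.card_filter]
  push_cast
  simp [chi, apply_ite]

private lemma qf_eq (f g : Equiv.Perm X) (S : Finset X) :
    qf f g S = ((S ∩ S.image f).card : ℤ) - ((S ∩ S.image g).card : ℤ) := by
  unfold qf
  rw [Finset.sum_sub_distrib, ← card_inter_image, ← card_inter_image]

private lemma qf_insert (f g : Equiv.Perm X) {S : Finset X} {x : X} (hx : x ∉ S) :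
    qf f g (insert x S) = qf f g S + rr f g x S := by
  unfold qf rr
  rw [Finset.sum_insert hx]
  have h1 : ∀ u ∈ S, chi (f u ∈ insert x S) - chi (g u ∈ insert x S)
      = (chi (f u ∈ S) - chi (g u ∈ S)) + (chi (f u = x) - chi (g u = x)) := fun u _ => by
    rw [chi_insert hx, chi_insert hx]; ring
  rw [Finset.sum_congr rfl h1, Finset.sum_add_distrib]; ring

private lemma rr_insert (f g : Equiv.Perm X) {S : Finset X} {x y : X} (hxy : x ≠ y)
    (hx : x ∉ S) (hy : y ∉ S) :
    rr f g y (insert x S) = rr f g y S +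
      (chi (f y = x) - chi (g y = x) + chi (f x = y) - chi (g x = y)) := by
  unfold rr
  rw [Finset.sum_insert hx]
  have hxyS : x ∉ insert y S := by simp [hxy, hx]
  rw [Finset.insert_comm, chi_insert hxyS, chi_insert hxyS]
  ring

private lemma rr_diag (f g : Equiv.Perm X) {x : X} {S : Finset X} (hx : x ∉ S)
    (h : ∀ u, u ≠ x → chi (f u = x) - chi (g u = x) + chi (f x = u) - chi (g x = u) = 0) :
    rr f g x S = chi (f x = x) - chi (g x = x) := by
  unfold rr
  rw [chi_insert hx, chi_insert hx]
  have h2 : ∑ u ∈ S, (chi (f u = x) - chi (g u = x))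
      = ∑ u ∈ S, (chi (g x = u) - chi (f x = u)) :=
    Finset.sum_congr rfl fun u hu => by
      have := h u (fun e => hx (e ▸ hu)); linarith
  rw [h2, Finset.sum_sub_distrib, sum_chi_eq, sum_chi_eq]
  ring

private lemma sdiff_helper {T : Finset X} {x y : X} (hx : x ∉ T) (hy : y ∉ T) :
    T \ ({x, y} : Finset X) = T ∧ insert x T \ ({x, y} : Finset X) = T ∧
    insert y T \ ({x, y} : Finset X) = T ∧
    insert x (insert y T) \ ({x, y} : Finset X) = T := by
  have hnot : ∀ u ∈ T, ¬(u = x ∨ u = y) := by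
    rintro u hu (rfl | rfl)
    · exact hx hu
    · exact hy hu
  refine ⟨?_, ?_, ?_, ?_⟩
  · ext u
    simp only [mem_sdiff, mem_insert, mem_singleton]
    exact ⟨fun h => h.1, fun hu => ⟨hu, hnot u hu⟩⟩
  · ext u
    simp only [mem_sdiff, mem_insert, mem_singleton]
    constructor
    · rintro ⟨rfl | hu, h2⟩
      · exact absurd (Or.inl rfl) h2
      · exact hu
    · intro hu; exact ⟨Or.inr hu, hnot u hu⟩
  · ext u
    simp only [mem_sdiff, mem_insert, mem_singleton]
    constructor
    · rintro ⟨rfl | hu, h2⟩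
      · exact absurd (Or.inr rfl) h2
      · exact hu
    · intro hu; exact ⟨Or.inr hu, hnot u hu⟩
  · ext u
    simp only [mem_sdiff, mem_insert, mem_singleton]
    constructor
    · rintro ⟨rfl | rfl | hu, h2⟩
      · exact absurd (Or.inl rfl) h2
      · exact absurd (Or.inr rfl) h2
      · exact hu
    · intro hu; exact ⟨Or.inr (Or.inr hu), hnot u hu⟩

private lemma count4 {P : Finset X → Prop} [DecidablePred P] {x y : X} (hxy : x ≠ y)
    (h : ∀ T : Finset X, x ∉ T → y ∉ T →
      ¬(P T ∧ P (insert x T) ∧ P (insert y T) ∧ P (insert x (insert y T)))) :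
    4 * (univ.filter P).card ≤ 3 * 2 ^ Fintype.card X := by
  classical
  set m := (univ \ ({x, y} : Finset X)).card with hm
  have hcard2 : ({x, y} : Finset X).card = 2 := by
    rw [card_insert_of_notMem (by simp [hxy]), card_singleton]
  have h2n : 2 ≤ Fintype.card X := by
    calc 2 = ({x, y} : Finset X).card := hcard2.symm
    _ ≤ (univ : Finset X).card := card_le_card (subset_univ _)
    _ = Fintype.card X := card_univ
  have hmn : m + 2 = Fintype.card X := by
    rw [hm, card_sdiff_of_subset (subset_univ _), hcard2, card_univ]; omega
  have hsurj : Set.SurjOn (fun S : Finset X => S \ ({x, y} : Finset X))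
      ↑(univ.filter fun S => ¬ P S) ↑((univ \ ({x, y} : Finset X)).powerset) := by
    intro T hT
    rw [mem_coe, mem_powerset] at hT
    have hxT : x ∉ T := fun hxT => by have := hT hxT; simp at this
    have hyT : y ∉ T := fun hyT => by have := hT hyT; simp at this
    obtain ⟨d1, d2, d3, d4⟩ := sdiff_helper hxT hyT
    by_cases p1 : P T
    · by_cases p2 : P (insert x T)
      · by_cases p3 : P (insert y T)
        · exact ⟨insert x (insert y T),
            by simp only [mem_coe, mem_filter]; exact ⟨mem_univ _, fun p4 => h T hxT hyT ⟨p1, p2, p3, p4⟩⟩, d4⟩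
        · exact ⟨insert y T, by simp only [mem_coe, mem_filter]; exact ⟨mem_univ _, p3⟩, d3⟩
      · exact ⟨insert x T, by simp only [mem_coe, mem_filter]; exact ⟨mem_univ _, p2⟩, d2⟩
    · exact ⟨T, by simp only [mem_coe, mem_filter]; exact ⟨mem_univ _, p1⟩, d1⟩
  have hle := Finset.card_le_card_of_surjOn _ hsurj
  rw [card_powerset, ← hm] at hle
  have htot := Finset.card_filter_add_card_filter_not (s := (univ : Finset (Finset X))) (p := P)
  rw [card_univ] at htot
  have hpow : 2 ^ Fintype.card X = 4 * 2 ^ m := by rw [← hmn, pow_add]; ring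
  have hfin : Fintype.card (Finset X) = 2 ^ Fintype.card X := Fintype.card_finset
  omega

private lemma count2 {P : Finset X → Prop} [DecidablePred P] (x : X)
    (h : ∀ T : Finset X, x ∉ T → ¬(P T ∧ P (insert x T))) :
    4 * (univ.filter P).card ≤ 3 * 2 ^ Fintype.card X := by
  classical
  set m := (univ \ ({x} : Finset X)).card with hm
  have h1n : 1 ≤ Fintype.card X := by
    calc 1 = ({x} : Finset X).card := (card_singleton x).symm
    _ ≤ (univ : Finset X).card := card_le_card (subset_univ _)
    _ = Fintype.card X := card_univ
  have hmn : m + 1 = Fintype.card X := by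
    rw [hm, card_sdiff_of_subset (subset_univ _), card_singleton, card_univ]; omega
  have hsurj : Set.SurjOn (fun S : Finset X => S \ ({x} : Finset X))
      ↑(univ.filter fun S => ¬ P S) ↑((univ \ ({x} : Finset X)).powerset) := by
    intro T hT
    rw [mem_coe, mem_powerset] at hT
    have hxT : x ∉ T := fun hxT => by have := hT hxT; simp at this
    have d1 : T \ ({x} : Finset X) = T := by
      ext u
      simp only [mem_sdiff, mem_singleton]
      exact ⟨fun h => h.1, fun hu => ⟨hu, fun e => hxT (e ▸ hu)⟩⟩
    have d2 : insert x T \ ({x} : Finset X) = T := by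
      rw [Finset.insert_sdiff_of_mem _ (mem_singleton_self x), d1]
    by_cases p1 : P T
    · exact ⟨insert x T,
        by simp only [mem_coe, mem_filter]; exact ⟨mem_univ _, fun p2 => h T hxT ⟨p1, p2⟩⟩, d2⟩
    · exact ⟨T, by simp only [mem_coe, mem_filter]; exact ⟨mem_univ _, p1⟩, d1⟩
  have hle := Finset.card_le_card_of_surjOn _ hsurj
  rw [card_powerset, ← hm] at hle
  have htot := Finset.card_filter_add_card_filter_not (s := (univ : Finset (Finset X))) (p := P)
  rw [card_univ] at htot
  have hpow : 2 ^ Fintype.card X = 2 * 2 ^ m := by rw [← hmn, pow_add]; ring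
  have hfin : Fintype.card (Finset X) = 2 ^ Fintype.card X := Fintype.card_finset
  omega

private lemma P_iff (f g : Equiv.Perm X) (S : Finset X) :
    (S ∩ S.image f).card = (S ∩ S.image g).card ↔ qf f g S = 0 := by
  rw [qf_eq]; omega

private lemma offdiag_bound (f g : Equiv.Perm X) {x y : X} (hxy : x ≠ y)
    (hB : chi (f x = y) - chi (g x = y) + chi (f y = x) - chi (g y = x) ≠ 0) :
    4 * (univ.filter (fun S : Finset X =>
        (S ∩ S.image f).card = (S ∩ S.image g).card)).card ≤ 3 * 2 ^ Fintype.card X := by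
  apply count4 hxy
  rintro T hxT hyT ⟨p1, p2, p3, p4⟩
  rw [P_iff] at p1 p2 p3 p4
  have hxT' : x ∉ insert y T := by simp [hxy, hxT]
  have e1 := qf_insert f g hxT
  have e2 := qf_insert f g hyT
  have e3 := qf_insert f g hxT'
  have e4 := rr_insert f g (Ne.symm hxy) hyT hxT
  omega

end Aux

theorem stmt6 {X : Type*} [Fintype X] [DecidableEq X] (f g : Equiv.Perm X) :
    4 * (Finset.univ.filter (fun S : Finset X =>
        (S ∩ S.image f).card = (S ∩ S.image g).card)).card ≤ 3 * 2 ^ Fintype.card X ∨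
    ∃ I : Finset X, I.image f = I ∧ I.image g = I ∧
      (∀ x ∈ I, f x = g x) ∧ (∀ x ∉ I, f x = g⁻¹ x) := by
  by_cases hB : ∀ x y : X,
      chi (f x = y) - chi (g x = y) + chi (f y = x) - chi (g y = x) = 0
  · right
    have claimA : ∀ x : X, f x ≠ g x → g (f x) = x := by
      intro x hne
      have h := hB x (f x)
      rw [chi_pos rfl, chi_neg (fun e : g x = f x => hne e.symm)] at h
      by_contra h2
      rw [chi_neg h2] at h
      rcases chi_cases (f (f x) = x) with e | e <;> rw [e] at h <;> omega
    have claimB : ∀ x : X, f x = g x → f (f x) = g (f x) := by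
      intro x he
      by_contra hne
      have h1 := claimA (f x) hne
      have hffx : f (f x) = x := g.injective (by rw [h1, he])
      have h := hB x (f x)
      rw [chi_pos rfl, chi_pos he.symm, chi_pos hffx] at h
      have hgfx : g (f x) = x := by
        rcases chi_cases (g (f x) = x) with e | e
        · rw [e] at h; omega
        · exact chi_eq_one e
      exact hne (by rw [hffx, hgfx])
    refine ⟨univ.filter (fun x => f x = g x), ?_, ?_,
      fun x hx => (mem_filter.mp hx).2, fun x hx => ?_⟩
    · apply Finset.eq_of_subset_of_card_le
      · intro v hv
        obtain ⟨u, hu, rfl⟩ := mem_image.mp hv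
        exact mem_filter.mpr ⟨mem_univ _, claimB u (mem_filter.mp hu).2⟩
      · rw [card_image_of_injective _ f.injective]
    · apply Finset.eq_of_subset_of_card_le
      · intro v hv
        obtain ⟨u, hu, rfl⟩ := mem_image.mp hv
        have heq := (mem_filter.mp hu).2
        rw [← heq]
        exact mem_filter.mpr ⟨mem_univ _, claimB u heq⟩
      · rw [card_image_of_injective _ g.injective]
    · have hne : f x ≠ g x := fun e => hx (mem_filter.mpr ⟨mem_univ _, e⟩)
      exact g.injective (by rw [claimA x hne, Equiv.Perm.coe_inv, Equiv.apply_symm_apply])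
  · left
    push_neg at hB
    obtain ⟨x, y, hxy0⟩ := hB
    by_cases hxy : x = y
    · subst hxy
      have hdiag : chi (f x = x) - chi (g x = x) ≠ 0 := fun e => hxy0 (by omega)
      by_cases hoff : ∀ u v : X, u ≠ v →
          chi (f u = v) - chi (g u = v) + chi (f v = u) - chi (g v = u) = 0
      · apply count2 x
        rintro T hxT ⟨p1, p2⟩
        rw [P_iff] at p1 p2
        have e1 := qf_insert f g hxT
        have e2 := rr_diag f g hxT (fun u hu => hoff u x hu)
        omega
      · push_neg at hoff
        obtain ⟨u, v, huv, hBuv⟩ := hoff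
        exact offdiag_bound f g huv hBuv
    · exact offdiag_bound f g hxy hxy0
end

section
/- Let X be a finite set and let f, g be permutations of X. Suppose there exists a subset I ⊆ X that is invariant under both f and g, with f|_I = g|_I and f|_{X∖I} = (g^{-1})|_{X∖I}. Then |S ∩ S^f| = |S ∩ S^g| for every subset S ⊆ X. -/
open Finset

theorem stmt7 {X : Type*} [Fintype X] [DecidableEq X] (f g : Equiv.Perm X)
    (I : Finset X) (hIf : I.image f = I) (hIg : I.image g = I)
    (hfg : ∀ x ∈ I, f x = g x) (hfg' : ∀ x ∉ I, f x = g⁻¹ x) :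
    ∀ S : Finset X, (S ∩ S.image f).card = (S ∩ S.image g).card := by
  have hf : ∀ x, x ∈ I ↔ f x ∈ I := by
    intro x; constructor
    · intro hx; rw [← hIf]; exact Finset.mem_image_of_mem f hx
    · intro hx; rw [← hIf] at hx
      obtain ⟨y, hy, hyx⟩ := Finset.mem_image.mp hx
      rwa [← f.injective hyx]
  have hg : ∀ x, x ∈ I ↔ g x ∈ I := by
    intro x; constructor
    · intro hx; rw [← hIg]; exact Finset.mem_image_of_mem g hx
    · intro hx; rw [← hIg] at hx
      obtain ⟨y, hy, hyx⟩ := Finset.mem_image.mp hx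
      rwa [← g.injective hyx]
  have hginv : ∀ x, x ∈ I ↔ g⁻¹ x ∈ I := by
    intro x
    rw [hg (g⁻¹ x)]
    simp
  intro S
  have h1 : S ∩ S.image f = (S.filter (fun s => f s ∈ S)).image f := by
    ext x
    simp only [Finset.mem_inter, Finset.mem_image, Finset.mem_filter]
    constructor
    · rintro ⟨hx, y, hy, rfl⟩; exact ⟨y, ⟨hy, hx⟩, rfl⟩
    · rintro ⟨y, ⟨hy, hfy⟩, rfl⟩; exact ⟨hfy, y, hy, rfl⟩
  have h2 : S ∩ S.image g = (S.filter (fun s => g s ∈ S)).image g := by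
    ext x
    simp only [Finset.mem_inter, Finset.mem_image, Finset.mem_filter]
    constructor
    · rintro ⟨hx, y, hy, rfl⟩; exact ⟨y, ⟨hy, hx⟩, rfl⟩
    · rintro ⟨y, ⟨hy, hfy⟩, rfl⟩; exact ⟨hfy, y, hy, rfl⟩
  rw [h1, h2, Finset.card_image_of_injective _ f.injective,
      Finset.card_image_of_injective _ g.injective]
  apply Finset.card_nbij (fun s => if s ∈ I then s else f s)
  · intro s hs
    simp only [Finset.mem_coe, Finset.mem_filter] at hs ⊢
    obtain ⟨hsS, hfsS⟩ := hs
    by_cases hsI : s ∈ I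
    · simp only [hsI, if_pos]
      exact ⟨hsS, by rw [← hfg s hsI]; exact hfsS⟩
    · simp only [hsI, if_neg, if_false]
      have hfs : f s = g⁻¹ s := hfg' s hsI
      refine ⟨hfsS, ?_⟩
      rw [hfs]
      simpa using hsS
  · intro a ha b hb hab
    simp only at hab
    by_cases haI : a ∈ I <;> by_cases hbI : b ∈ I <;>
      simp only [haI, hbI, if_pos, if_neg, if_true, if_false] at hab
    · exact hab
    · exact absurd ((hf b).mpr (hab ▸ haI)) hbI
    · exact absurd ((hf a).mpr (hab ▸ hbI)) haI
    · exact f.injective hab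
  · intro t ht
    simp only [Finset.mem_coe, Finset.mem_filter] at ht
    obtain ⟨htS, hgtS⟩ := ht
    by_cases htI : t ∈ I
    · refine ⟨t, ?_, ?_⟩
      · simp only [Set.mem_image, Finset.mem_coe, Finset.mem_filter]
        exact ⟨htS, by rw [hfg t htI]; exact hgtS⟩
      · simp [htI]
    · refine ⟨g t, ?_, ?_⟩
      · simp only [Finset.mem_coe, Finset.mem_filter]
        have hgtI : g t ∉ I := fun h => htI ((hg t).mpr h)
        refine ⟨hgtS, ?_⟩
        rw [hfg' (g t) hgtI]
        simpa using htS
      · have hgtI : g t ∉ I := fun h => htI ((hg t).mpr h)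
        simp only [hgtI, if_neg, if_false]
        rw [hfg' (g t) hgtI]
        simp
end

section
/- Let X be a finite set, let A be an X×X integer matrix, and suppose there exist distinct i, j ∈ X with A_{i,j} + A_{j,i} ≠ 0. Then the number of vectors δ ∈ {0,1}^X with δᵀAδ = 0 is at most (3/4)·2^{|X|}. -/
open Finset

private def up2 {X : Type*} [DecidableEq X] (i j : X) (g : X → Bool) (a b : Bool) : X → Bool :=
  Function.update (Function.update g i a) j b

private lemma up2_apply {X : Type*} [DecidableEq X] {i j : X} (hij : i ≠ j)
    (g : X → Bool) (a b : Bool) (z : X) :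
    up2 i j g a b z = if z = j then b else if z = i then a else g z := by
  unfold up2
  rcases eq_or_ne z j with rfl | hzj
  · simp
  · rcases eq_or_ne z i with rfl | hzi
    · simp [Function.update_of_ne hij, hzj]
    · simp [Function.update_of_ne hzj, Function.update_of_ne hzi, hzj, hzi]

set_option maxHeartbeats 1000000 in
private lemma step_lemma {X : Type*} [DecidableEq X] {i j : X} (hij : i ≠ j)
    (g : X → Bool) (a : ℤ) (x y : X)
    (f : X → Bool → Bool → ℤ)
    (hf : ∀ z p q, f z p q = if z = j then (if q then (1:ℤ) else 0)
      else if z = i then (if p then (1:ℤ) else 0) else (if g z then (1:ℤ) else 0)) :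
    f x true true * a * f y true true + f x false false * a * f y false false
      - f x true false * a * f y true false - f x false true * a * f y false true
    = (if x = i then (1:ℤ) else 0) * a * (if y = j then (1:ℤ) else 0)
      + (if x = j then (1:ℤ) else 0) * a * (if y = i then (1:ℤ) else 0) := by
  simp only [hf]
  by_cases hxj : x = j <;> by_cases hxi : x = i <;> by_cases hyj : y = j <;>
    by_cases hyi : y = i <;> simp_all

set_option maxHeartbeats 1000000 in
private lemma key_identity {X : Type*} [Fintype X] [DecidableEq X] (A : X → X → ℤ)
    {i j : X} (hij : i ≠ j) (g : X → Bool) (hgi : g i = false) (hgj : g j = false)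
    (q : (X → Bool) → ℤ)
    (hq : ∀ δ, q δ = ∑ x : X, ∑ y : X,
      (if δ x then (1 : ℤ) else 0) * A x y * (if δ y then (1 : ℤ) else 0)) :
    q (up2 i j g true true) + q (up2 i j g false false)
      - q (up2 i j g true false) - q (up2 i j g false true) = A i j + A j i := by
  have hf : ∀ (z : X) (p r : Bool), (if up2 i j g p r z then (1:ℤ) else 0)
      = if z = j then (if r then (1:ℤ) else 0)
        else if z = i then (if p then (1:ℤ) else 0) else (if g z then (1:ℤ) else 0) := by
    intro z p r
    rw [up2_apply hij]
    by_cases hzj : z = j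
    · simp [hzj]
    · by_cases hzi : z = i <;> simp [hzj, hzi, hij]
  simp only [hq]
  rw [← Finset.sum_add_distrib, ← Finset.sum_sub_distrib, ← Finset.sum_sub_distrib]
  calc (∑ x : X, ((∑ y : X, (if up2 i j g true true x then (1:ℤ) else 0) * A x y * (if up2 i j g true true y then (1:ℤ) else 0))
        + (∑ y : X, (if up2 i j g false false x then (1:ℤ) else 0) * A x y * (if up2 i j g false false y then (1:ℤ) else 0))
        - (∑ y : X, (if up2 i j g true false x then (1:ℤ) else 0) * A x y * (if up2 i j g true false y then (1:ℤ) else 0))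
        - (∑ y : X, (if up2 i j g false true x then (1:ℤ) else 0) * A x y * (if up2 i j g false true y then (1:ℤ) else 0))))
      = ∑ x : X, ∑ y : X, ((if x = i then (1:ℤ) else 0) * A x y * (if y = j then (1:ℤ) else 0)
          + (if x = j then (1:ℤ) else 0) * A x y * (if y = i then (1:ℤ) else 0)) := by
        refine Finset.sum_congr rfl fun x _ => ?_
        rw [← Finset.sum_add_distrib, ← Finset.sum_sub_distrib, ← Finset.sum_sub_distrib]
        exact Finset.sum_congr rfl fun y _ =>
          step_lemma hij g (A x y) x y (fun z p r => if up2 i j g p r z then (1:ℤ) else 0) hf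
    _ = A i j + A j i := by
        simp [Finset.sum_add_distrib, ite_mul, mul_ite, Finset.sum_ite_eq, Finset.sum_ite_eq']

private lemma aux_count {X : Type*} [Fintype X] [DecidableEq X] (i j : X) (hij : i ≠ j)
    (p : (X → Bool) → Prop) [DecidablePred p]
    (hp : ∀ g : X → Bool, g i = false → g j = false →
      ¬ (p (up2 i j g true true) ∧ p (up2 i j g false false) ∧
         p (up2 i j g true false) ∧ p (up2 i j g false true))) :
    4 * (univ.filter p).card ≤ 3 * 2 ^ Fintype.card X := by
  classical
  set F : (X → Bool) → (X → Bool) := fun δ => Function.update (Function.update δ i false) j false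
    with hF
  have hFj : ∀ δ, F δ j = false := fun δ => by simp [hF]
  have hFi : ∀ δ, F δ i = false := fun δ => by simp [hF, Function.update_of_ne hij]
  have hFout : ∀ δ z, z ≠ i → z ≠ j → F δ z = δ z := fun δ z hzi hzj => by
    simp [hF, Function.update_of_ne hzi, Function.update_of_ne hzj]
  have hFup : ∀ (g : X → Bool), g i = false → g j = false → ∀ a b, F (up2 i j g a b) = g := by
    intro g hgi hgj a b
    funext z
    rcases eq_or_ne z i with rfl | hzi
    · rw [hFi, hgi]
    · rcases eq_or_ne z j with rfl | hzj
      · rw [hFj, hgj]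
      · rw [hFout _ _ hzi hzj, up2_apply hij, if_neg hzj, if_neg hzi]
  have hupi : ∀ (g : X → Bool) a b, up2 i j g a b i = a := by
    intro g a b; rw [up2_apply hij, if_neg hij, if_pos rfl]
  have hupj : ∀ (g : X → Bool) a b, up2 i j g a b j = b := by
    intro g a b; rw [up2_apply hij, if_pos rfl]
  set S : Finset (X → Bool) := univ.filter p with hS
  have h1 : S.card ≤ 3 * (S.image F).card := by
    apply Finset.card_le_mul_card_image
    intro g hg
    obtain ⟨δ0, _, hδ0⟩ := Finset.mem_image.mp hg
    have hgi : g i = false := by rw [← hδ0]; exact hFi δ0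
    have hgj : g j = false := by rw [← hδ0]; exact hFj δ0
    set T : Finset (X → Bool) :=
      Finset.image (fun ab : Bool × Bool => up2 i j g ab.1 ab.2) univ with hT
    have hsub : S.filter (fun δ => F δ = g) ⊆ T := by
      intro δ hδ
      have hFδ : F δ = g := (Finset.mem_filter.mp hδ).2
      have hδeq : δ = up2 i j g (δ i) (δ j) := by
        funext z
        rw [up2_apply hij]
        rcases eq_or_ne z j with rfl | hzj
        · simp
        · rcases eq_or_ne z i with rfl | hzi
          · simp [hzj]
          · rw [if_neg hzj, if_neg hzi, ← hFδ, hFout _ _ hzi hzj]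
      rw [hT, hδeq]
      exact Finset.mem_image.mpr ⟨(δ i, δ j), Finset.mem_univ _, rfl⟩
    by_contra hc
    push_neg at hc
    have hTcard : T.card ≤ 4 := le_trans (Finset.card_image_le) (by simp)
    have heq : S.filter (fun δ => F δ = g) = T :=
      Finset.eq_of_subset_of_card_le hsub (hTcard.trans hc)
    have hall : ∀ a b : Bool, p (up2 i j g a b) := by
      intro a b
      have hmem : up2 i j g a b ∈ T :=
        Finset.mem_image.mpr ⟨(a, b), Finset.mem_univ _, rfl⟩
      rw [← heq] at hmem
      exact (Finset.mem_filter.mp (Finset.mem_filter.mp hmem).1).2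
    exact hp g hgi hgj ⟨hall _ _, hall _ _, hall _ _, hall _ _⟩
  have h2 : 4 * (univ.image F).card ≤ 2 ^ Fintype.card X := by
    have hcard : (univ : Finset (X → Bool)).card = 2 ^ Fintype.card X := by
      simp [Finset.card_univ, Fintype.card_fun]
    rw [← hcard, Finset.card_eq_sum_card_image F univ]
    have hge : ∀ g ∈ univ.image F, 4 ≤ (univ.filter (fun δ => F δ = g)).card := by
      intro g hg
      obtain ⟨δ0, _, hδ0⟩ := Finset.mem_image.mp hg
      have hgi : g i = false := by rw [← hδ0]; exact hFi δ0
      have hgj : g j = false := by rw [← hδ0]; exact hFj δ0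
      have hinj : Function.Injective (fun ab : Bool × Bool => up2 i j g ab.1 ab.2) := by
        rintro ⟨a, b⟩ ⟨a', b'⟩ hE
        have h1' := congrFun hE i
        have h2' := congrFun hE j
        simp only [hupi, hupj] at h1' h2'
        simp [h1', h2']
      have hsub : Finset.image (fun ab : Bool × Bool => up2 i j g ab.1 ab.2) univ
          ⊆ univ.filter (fun δ => F δ = g) := by
        intro δ hδ
        obtain ⟨⟨a, b⟩, _, rfl⟩ := Finset.mem_image.mp hδ
        exact Finset.mem_filter.mpr ⟨Finset.mem_univ _, hFup g hgi hgj a b⟩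
      calc (4 : ℕ) = (Finset.image (fun ab : Bool × Bool => up2 i j g ab.1 ab.2) univ).card := by
            rw [Finset.card_image_of_injective _ hinj]; simp
        _ ≤ _ := Finset.card_le_card hsub
    calc 4 * (univ.image F).card = (univ.image F).card • 4 := by rw [smul_eq_mul, mul_comm]
      _ ≤ _ := Finset.card_nsmul_le_sum _ _ _ hge
  have h3 : (S.image F).card ≤ (univ.image F).card :=
    Finset.card_le_card (Finset.image_subset_image (Finset.filter_subset _ _))
  set m := 2 ^ Fintype.card X
  omega

theorem stmt8 {X : Type*} [Fintype X] [DecidableEq X] (A : X → X → ℤ)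
    (i j : X) (hij : i ≠ j) (hA : A i j + A j i ≠ 0) :
    4 * (Finset.univ.filter (fun δ : X → Bool =>
        (∑ x : X, ∑ y : X,
          (if δ x then (1 : ℤ) else 0) * A x y * (if δ y then (1 : ℤ) else 0)) = 0)).card
      ≤ 3 * 2 ^ Fintype.card X := by
  classical
  apply aux_count i j hij
  intro g hgi hgj ⟨h11, h00, h10, h01⟩
  apply hA
  have hk := key_identity A hij g hgi hgj
    (fun δ => ∑ x : X, ∑ y : X,
      (if δ x then (1 : ℤ) else 0) * A x y * (if δ y then (1 : ℤ) else 0)) (fun δ => rfl)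
  simp only [h11, h00, h10, h01] at hk
  linarith
end

section
/- Let R be a finite group, N a normal subgroup of R, and suppose R/N is an elementary abelian 2-group. Let f be a permutation of R fixing the identity, normalizing N (in Sym(R), conjugation by f preserves the regular copy of N), and fixing each coset of N setwise. If f commutes with the right regular action of a subgroup K of index 2 in R containing N, and f has odd prime order p, then every nontrivial cycle of f on R∖K has length p and f is determined by the image of a single element x ∈ R∖K, which must be of the form xk with k ∈ N of order p. -/
open Function

lemma index_two_mem {R : Type*} [Group R] (K : Subgroup R) (hK : K.index = 2)
    {x y : R} (hx : x ∉ K) (hy : y ∉ K) : x⁻¹ * y ∈ K := by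
  classical
  by_contra h
  have h1 : (QuotientGroup.mk x : R ⧸ K) ≠ QuotientGroup.mk 1 := by
    simp only [ne_eq, QuotientGroup.eq]
    simpa using hx
  have h2 : (QuotientGroup.mk y : R ⧸ K) ≠ QuotientGroup.mk 1 := by
    simp only [ne_eq, QuotientGroup.eq]
    simpa using hy
  have h3 : (QuotientGroup.mk x : R ⧸ K) ≠ QuotientGroup.mk y := by
    simp only [ne_eq, QuotientGroup.eq]
    exact h
  have hcard : Nat.card (R ⧸ K) = 2 := hK
  have : Nat.card (R ⧸ K) ≥ 3 := by
    have hfin : Finite (R ⧸ K) := Nat.finite_of_card_ne_zero (by omega)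
    haveI : Fintype (R ⧸ K) := Fintype.ofFinite _
    haveI : DecidableEq (R ⧸ K) := Classical.decEq _
    rw [Nat.card_eq_fintype_card]
    have hsub : ({QuotientGroup.mk x, QuotientGroup.mk y, QuotientGroup.mk 1} : Finset (R ⧸ K)).card ≤ Fintype.card (R ⧸ K) :=
      Finset.card_le_univ _
    have : ({QuotientGroup.mk x, QuotientGroup.mk y, QuotientGroup.mk 1} : Finset (R ⧸ K)).card = 3 := by
      rw [Finset.card_insert_of_notMem (by simp [h3, h1]),
        Finset.card_insert_of_notMem (by simp [h2])]
      simp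
    omega
  omega

theorem stmt14 {R : Type*} [Group R] [Fintype R] [DecidableEq R]
    (N K : Subgroup R) [N.Normal] (hNK : N ≤ K) (hK : K.index = 2)
    (helem : ∀ x : R, x ^ 2 ∈ N)
    (f : Equiv.Perm R) (hf1 : f 1 = 1)
    (hnorm : ∀ n ∈ N, ∃ m ∈ N, ∀ x : R, f (f.symm x * n) = x * m)
    (hcoset : ∀ x : R, x⁻¹ * f x ∈ N)
    (hcent : ∀ x : R, ∀ k ∈ K, f (x * k) = f x * k)
    (p : ℕ) (hp : p.Prime) (hodd : Odd p) (hord : orderOf f = p) :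
    ∀ x : R, x ∉ K → ∃ k : R, k ∈ N ∧ orderOf k = p ∧
      (∀ k' ∈ K, f (x * k') = x * k * k') ∧
      Function.minimalPeriod (⇑f) x = p := by
  haveI : Fact p.Prime := ⟨hp⟩
  intro x hx
  set k : R := x⁻¹ * f x with hkdef
  have hkN : k ∈ N := hcoset x
  have hkK : k ∈ K := hNK hkN
  have hfx : f x = x * k := by rw [hkdef]; group
  refine ⟨k, hkN, ?_, ?_, ?_⟩
  · -- orderOf k = p
    have hiter : ∀ n : ℕ, f^[n] x = x * k ^ n := by
      intro n
      induction n with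
      | zero => simp
      | succ n ih =>
        rw [Function.iterate_succ_apply', ih, hcent x (k ^ n) (pow_mem hkK n), hfx,
          pow_succ]
        group
    have hkp : k ^ p = 1 := by
      have hfp : f ^ p = 1 := by rw [← hord]; exact pow_orderOf_eq_one f
      have : f^[p] x = x := by
        rw [Equiv.Perm.iterate_eq_pow, hfp]; rfl
      rw [hiter p] at this
      exact mul_left_cancel (by rw [this, mul_one])
    have hk1 : k ≠ 1 := by
      intro hk1
      have hfix : f x = x := by rw [hfx, hk1, mul_one]
      have : f = 1 := by
        ext y
        by_cases hy : y ∈ K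
        · have := hcent 1 y hy
          simpa [hf1] using this
        · have hxy : x⁻¹ * y ∈ K := index_two_mem K hK hx hy
          have := hcent x (x⁻¹ * y) hxy
          rw [hfix] at this
          simpa [mul_assoc] using this
      rw [this] at hord
      simp at hord
      have := hp.two_le
      omega
    exact orderOf_eq_prime hkp hk1
  · intro k' hk'
    rw [hcent x k' hk', hfx]
  · -- minimal period
    have hiter : ∀ n : ℕ, f^[n] x = x * k ^ n := by
      intro n
      induction n with
      | zero => simp
      | succ n ih =>
        rw [Function.iterate_succ_apply', ih, hcent x (k ^ n) (pow_mem hkK n), hfx,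
          pow_succ]
        group
    have hper : Function.IsPeriodicPt (⇑f) p x := by
      have hfp : f ^ p = 1 := by rw [← hord]; exact pow_orderOf_eq_one f
      have : f^[p] x = x := by
        rw [Equiv.Perm.iterate_eq_pow, hfp]; rfl
      exact this
    have hdvd := hper.minimalPeriod_dvd
    rcases (Nat.Prime.eq_one_or_self_of_dvd hp _ hdvd) with h1 | h
    · exfalso
      have hfix : Function.IsFixedPt (⇑f) x :=
        (Function.minimalPeriod_eq_one_iff_isFixedPt).mp h1
      have hfeq : f x = x := hfix
      have hk1 : k = 1 := by
        have : x * k = x := by rw [← hfx, hfeq]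
        exact mul_left_cancel (by rw [this, mul_one])
      -- then f = 1 contradiction
      have : f = 1 := by
        ext y
        by_cases hy : y ∈ K
        · have := hcent 1 y hy
          simpa [hf1] using this
        · have hxy : x⁻¹ * y ∈ K := index_two_mem K hK hx hy
          have := hcent x (x⁻¹ * y) hxy
          rw [hfeq] at this
          simpa [mul_assoc] using this
      rw [this] at hord
      simp at hord
      have := hp.two_le
      omega
    · exact h
end

section
/- Let T be a finite group, N a subgroup of index 2, γ ∈ T∖N, and t ∈ N with o(t) ≥ 3. Let α : T → T be a permutation with α(N) = N and α(γn) = γtn for all n ∈ N. Then the number of subsets X ⊆ T that are inverse-closed (X = X^{-1}) and α-invariant (X^α = X) is at most 2^{c(T) − |N|/6}, where c(T) = (|T| + |I(T)|)/2 and I(T) is the set of elements of T of order at most 2. -/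
open Finset
open scoped Pointwise

theorem stmt18 {T : Type*} [Group T] [Fintype T] [DecidableEq T]
    (N : Subgroup T) (hN : N.index = 2) (γ : T) (hγ : γ ∉ N)
    (t : T) (ht : t ∈ N) (hto : 3 ≤ orderOf t)
    (α : Equiv.Perm T)
    (hαN : ∀ x ∈ N, α x ∈ N)
    (hαγ : ∀ n ∈ N, α (γ * n) = γ * t * n) :
    ((Finset.univ.filter (fun X : Finset T =>
        X⁻¹ = X ∧ X.image α = X)).card : ℝ) ≤
      2 ^ (((Fintype.card T : ℝ) +
            ((Finset.univ.filter (fun x : T => x ^ 2 = 1)).card : ℝ)) / 2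
           - (Nat.card N : ℝ) / 6) := by
  classical
  set m := orderOf t with hm
  have hm0 : 0 < m := by omega
  -- coset fact
  have hcoset : ∀ x : T, x ∉ N → γ⁻¹ * x ∈ N := by
    intro x hx
    rw [Subgroup.mul_mem_iff_of_index_two hN]
    constructor
    · intro h; exact absurd (by simpa using N.inv_mem h) hγ
    · intro h; exact absurd h hx
  have hcomp : ∀ (a b : ℕ) (x : T), (α ^ a) ((α ^ b) x) = (α ^ (a + b)) x := by
    intro a b x; rw [pow_add, Equiv.Perm.mul_apply]
  have hpow : ∀ (k : ℕ) (n : T), n ∈ N → (α ^ k) (γ * n) = γ * t ^ k * n := by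
    intro k
    induction k with
    | zero => intro n hn; simp
    | succ k ih =>
      intro n hn
      have h1 : (α ^ (k + 1)) (γ * n) = (α ^ k) (α (γ * n)) := by
        rw [pow_succ, Equiv.Perm.mul_apply]
      rw [h1, hαγ n hn, mul_assoc, ih (t * n) (N.mul_mem ht hn)]
      rw [pow_succ, mul_assoc, mul_assoc, mul_assoc]
  have hpow' : ∀ (k : ℕ) (x : T), x ∉ N → (α ^ k) x = γ * t ^ k * (γ⁻¹ * x) := by
    intro k x hx
    have := hpow k (γ⁻¹ * x) (hcoset x hx)
    rwa [mul_inv_cancel_left] at this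
  have hstay : ∀ (k : ℕ) (x : T), x ∉ N → (α ^ k) x ∉ N := by
    intro k x hx hmem
    rw [hpow' k x hx] at hmem
    have hn : t ^ k * (γ⁻¹ * x) ∈ N := N.mul_mem (N.pow_mem ht k) (hcoset x hx)
    have : γ ∈ N := by
      have h2 := N.mul_mem hmem (N.inv_mem hn)
      simpa [mul_assoc] using h2
    exact hγ this
  have hne : ∀ (k : ℕ) (x : T), x ∉ N → 0 < k → k < m → (α ^ k) x ≠ x := by
    intro k x hx hk hkm heq
    rw [hpow' k x hx] at heq
    have h1 : γ * t ^ k * (γ⁻¹ * x) = γ * 1 * (γ⁻¹ * x) := by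
      rw [heq]; group
    have h2 : t ^ k = 1 := by
      have := mul_right_cancel h1
      exact mul_left_cancel this
    have := Nat.le_of_dvd hk (orderOf_dvd_of_pow_eq_one h2)
    omega
  have hmod : ∀ (a : ℕ) (x : T), x ∉ N → (α ^ a) x = (α ^ (a % m)) x := by
    intro a x hx
    rw [hpow' a x hx, hpow' (a % m) x hx, hm, pow_mod_orderOf]
  -- cycles
  set C : T → Finset T := fun x => (Finset.range m).image (fun k => (α ^ k) x) with hC
  have hCmem : ∀ x : T, x ∈ C x := by
    intro x
    simp only [hC, mem_image]
    exact ⟨0, by simpa using hm0, by simp⟩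
  have hCnotN : ∀ x y : T, x ∉ N → y ∈ C x → y ∉ N := by
    intro x y hx hy
    simp only [hC, mem_image, mem_range] at hy
    obtain ⟨k, _, rfl⟩ := hy
    exact hstay k x hx
  have hCsymm : ∀ x y : T, x ∉ N → y ∈ C x → x ∈ C y := by
    intro x y hx hy
    simp only [hC, mem_image, mem_range] at hy ⊢
    obtain ⟨k, hk, rfl⟩ := hy
    rcases Nat.eq_zero_or_pos k with rfl | hk0
    · exact ⟨0, hm0, rfl⟩
    · refine ⟨m - k, by omega, ?_⟩
      rw [hcomp]
      have : m - k + k = m := by omega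
      rw [this, hpow' m x hx, hm, pow_orderOf_eq_one]
      group
  have hCsub : ∀ x y : T, x ∉ N → y ∈ C x → C y ⊆ C x := by
    intro x y hx hy z hz
    simp only [hC, mem_image, mem_range] at hy hz ⊢
    obtain ⟨k, hk, rfl⟩ := hy
    obtain ⟨j, hj, rfl⟩ := hz
    refine ⟨(j + k) % m, Nat.mod_lt _ hm0, ?_⟩
    rw [← hmod (j + k) x hx, ← hcomp]
  have hCeq : ∀ x y : T, x ∉ N → y ∈ C x → C y = C x := by
    intro x y hx hy
    have hy' : y ∉ N := hCnotN x y hx hy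
    exact subset_antisymm (hCsub x y hx hy) (hCsub y x hy' (hCsymm x y hx hy))
  have hthree : ∀ (x : T), x ∉ N → ∀ i < 3, ∀ j < 3, (α ^ i) x = (α ^ j) x → i = j := by
    intro x hx i hi j hj hij
    by_contra hne'
    wlog hlt : j < i generalizing i j
    · exact this j hj i hi hij.symm (Ne.symm hne') (by omega)
    have h1 : (α ^ (i - j)) ((α ^ j) x) = (α ^ j) x := by
      rw [hcomp]
      have : i - j + j = i := by omega
      rw [this, hij]
    exact hne (i - j) ((α ^ j) x) (hstay j x hx) (by omega) (by omega) h1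
  -- linear order via Fin
  set f : T → Fin (Fintype.card T) := fun x => Fintype.equivFin T x with hf
  have hfinj : Function.Injective f := (Fintype.equivFin T).injective
  set Nfin : Finset T := univ.filter (fun x => x ∈ N) with hNfin
  set Γfin : Finset T := univ.filter (fun x => x ∉ N) with hΓfin
  set R' : Finset T := Γfin.filter (fun x => ∀ y ∈ C x, f x ≤ f y) with hR'
  have hrep : ∀ x : T, x ∉ N → ∃ r ∈ R', x ∈ C r := by
    intro x hx
    obtain ⟨r, hrC, hrmin⟩ := (C x).exists_min_image f ⟨x, hCmem x⟩
    have hr' : r ∉ N := hCnotN x r hx hrC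
    refine ⟨r, ?_, hCsymm x r hx hrC⟩
    rw [hR', mem_filter]
    refine ⟨by rw [hΓfin, mem_filter]; exact ⟨mem_univ _, hr'⟩, ?_⟩
    intro y hy
    exact hrmin y (hCeq x r hx hrC ▸ hy)
  have hR'card : 3 * R'.card ≤ Γfin.card := by
    have key := Finset.card_le_card_of_injOn (fun p : T × ℕ => (α ^ p.2) p.1)
      (s := R' ×ˢ Finset.range 3) (t := Γfin) ?_ ?_
    · rwa [Finset.card_product, Finset.card_range, mul_comm] at key
    · rintro ⟨r, k⟩ hp
      rw [Finset.mem_coe, Finset.mem_product] at hp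
      obtain ⟨hr, _⟩ := hp
      rw [hR', mem_filter, hΓfin, mem_filter] at hr
      have hrN : r ∉ N := hr.1.2
      rw [Finset.mem_coe, hΓfin, mem_filter]
      exact ⟨mem_univ _, hstay k r hrN⟩
    · rintro ⟨r, i⟩ hp ⟨r', j⟩ hq heq
      simp only [Finset.mem_coe, Finset.mem_product, Finset.mem_range] at hp hq
      obtain ⟨hr, hi⟩ := hp
      obtain ⟨hr', hj⟩ := hq
      rw [hR', mem_filter, hΓfin, mem_filter] at hr hr'
      have hrN : r ∉ N := hr.1.2
      have hrmin := hr.2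
      have hr'N : r' ∉ N := hr'.1.2
      have hr'min := hr'.2
      simp only at heq
      -- r' ∈ C r
      have hr'Cr : r' ∈ C r := by
        have h1 : (α ^ (m - j)) ((α ^ j) r') = r' := by
          rw [hcomp]
          have hmj : m - j + j = m := by omega
          rw [hmj, hpow' m r' hr'N, hm, pow_orderOf_eq_one]
          group
        have h2 : (α ^ ((m - j) + i)) r = r' := by
          rw [← hcomp, heq, h1]
        simp only [hC, mem_image, mem_range]
        exact ⟨(m - j + i) % m, Nat.mod_lt _ hm0, by rw [← hmod _ _ hrN, h2]⟩
      have hrCr' : r ∈ C r' := hCsymm r r' hrN hr'Cr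
      have hfe : f r = f r' := le_antisymm (hrmin r' hr'Cr) (hr'min r hrCr')
      have hrr : r = r' := hfinj hfe
      subst hrr
      have : i = j := hthree r hrN i hi j hj heq
      simp [this]
  -- halves of N
  set HN : Finset T := Nfin.filter (fun x => x⁻¹ = x ∨ f x < f x⁻¹) with hHN
  set Ifin : Finset T := univ.filter (fun x : T => x ^ 2 = 1) with hIfin
  have hhalf : ∀ x : T, x ∈ N → ∃ h ∈ HN, h = x ∨ h = x⁻¹ := by
    intro x hx
    by_cases hinv : x⁻¹ = x
    · exact ⟨x, by rw [hHN, mem_filter, hNfin, mem_filter]; exact ⟨⟨mem_univ _, hx⟩, Or.inl hinv⟩, Or.inl rfl⟩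
    · rcases lt_or_gt_of_ne (fun h : f x = f x⁻¹ => hinv (hfinj h).symm) with hlt | hgt
      · exact ⟨x, by rw [hHN, mem_filter, hNfin, mem_filter]; exact ⟨⟨mem_univ _, hx⟩, Or.inr hlt⟩, Or.inl rfl⟩
      · refine ⟨x⁻¹, ?_, Or.inr rfl⟩
        rw [hHN, mem_filter, hNfin, mem_filter, inv_inv]
        exact ⟨⟨mem_univ _, N.inv_mem hx⟩, Or.inr hgt⟩
  have hHNcard : 2 * HN.card ≤ Nfin.card + Ifin.card := by
    set A : Finset T := HN.filter (fun x => ¬ x⁻¹ = x) with hA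
    set HN' : Finset T := Nfin.filter (fun x => ¬ x⁻¹ = x ∧ f x⁻¹ < f x) with hHN'
    have h1 : HN.card ≤ A.card + Ifin.card := by
      have hsub : HN ⊆ A ∪ Ifin := by
        intro x hx
        by_cases hinv : x⁻¹ = x
        · have : x ^ 2 = 1 := by
            rw [sq]
            nth_rewrite 1 [← hinv]
            exact inv_mul_cancel x
          exact Finset.mem_union_right _ (by rw [hIfin, mem_filter]; exact ⟨mem_univ _, this⟩)
        · exact Finset.mem_union_left _ (by rw [hA, mem_filter]; exact ⟨hx, hinv⟩)
      calc HN.card ≤ (A ∪ Ifin).card := Finset.card_le_card hsub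
        _ ≤ A.card + Ifin.card := Finset.card_union_le _ _
    have h2 : A.card ≤ HN'.card := by
      apply Finset.card_le_card_of_injOn (fun x => x⁻¹)
      · intro x hx
        rw [Finset.mem_coe, mem_filter, hHN, mem_filter, hNfin, mem_filter] at hx
        obtain ⟨⟨⟨_, hxN⟩, hor⟩, hninv⟩ := hx
        have hlt : f x < f x⁻¹ := hor.resolve_left hninv
        rw [Finset.mem_coe, hHN', mem_filter, hNfin, mem_filter, inv_inv]
        exact ⟨⟨mem_univ _, N.inv_mem hxN⟩, fun h => hninv h.symm, hlt⟩
      · intro x _ y _ h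
        simpa using congrArg (·⁻¹) h
    have h3 : HN.card + HN'.card ≤ Nfin.card := by
      rw [← Finset.card_union_of_disjoint]
      · apply Finset.card_le_card
        apply Finset.union_subset
        · exact Finset.filter_subset _ _
        · exact Finset.filter_subset _ _
      · rw [Finset.disjoint_left]
        intro x hx hx'
        rw [hHN, mem_filter] at hx
        rw [hHN', mem_filter] at hx'
        obtain ⟨_, hor⟩ := hx
        obtain ⟨_, hninv, hlt⟩ := hx'
        rcases hor with h | h
        · exact hninv h
        · exact absurd h (not_lt.mpr hlt.le)
    omega
  -- main injection
  set S : Finset T := HN ∪ R' with hS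
  have hScard : S.card = HN.card + R'.card := by
    rw [hS, Finset.card_union_of_disjoint]
    rw [Finset.disjoint_left]
    intro x hx hx'
    rw [hHN, mem_filter, hNfin, mem_filter] at hx
    rw [hR', mem_filter, hΓfin, mem_filter] at hx'
    exact hx'.1.2 hx.1.2
  set F : Finset (Finset T) := univ.filter (fun X : Finset T => X⁻¹ = X ∧ X.image α = X)
    with hF
  have hmain : F.card ≤ S.powerset.card := by
    apply Finset.card_le_card_of_injOn (fun X => X ∩ S)
    · intro X _; simp [Finset.mem_powerset]
    · intro X hX Y hY hXY
      simp only [hF, Finset.coe_filter, Set.mem_setOf_eq] at hX hY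
      obtain ⟨hX1, hX2⟩ := hX.2
      obtain ⟨hY1, hY2⟩ := hY.2
      -- membership lemmas
      have hinvmem : ∀ (Z : Finset T), Z⁻¹ = Z → ∀ x : T, x ∈ Z ↔ x⁻¹ ∈ Z := by
        intro Z hZ x
        conv_lhs => rw [← hZ]
        exact Finset.mem_inv'
      have hα1 : ∀ (Z : Finset T), Z.image α = Z → ∀ x : T, x ∈ Z ↔ α x ∈ Z := by
        intro Z hZ x
        constructor
        · intro hx; rw [← hZ]; exact Finset.mem_image_of_mem _ hx
        · intro hx
          rw [← hZ] at hx
          obtain ⟨y, hy, hyx⟩ := Finset.mem_image.mp hx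
          rwa [← α.injective hyx]
      have hαmem : ∀ (Z : Finset T), Z.image α = Z → ∀ (k : ℕ) (x : T),
          x ∈ Z ↔ (α ^ k) x ∈ Z := by
        intro Z hZ k
        induction k with
        | zero => intro x; simp
        | succ k ih =>
          intro x
          have h1 : (α ^ (k + 1)) x = α ((α ^ k) x) := by
            rw [pow_succ', Equiv.Perm.mul_apply]
          rw [h1]
          exact (ih x).trans (hα1 Z hZ _)
      simp only at hXY
      ext x
      by_cases hxN : x ∈ N
      · obtain ⟨h, hhHN, hcase⟩ := hhalf x hxN
        have hhS : h ∈ S := Finset.mem_union_left _ hhHN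
        have e1 : x ∈ X ↔ h ∈ X := by
          rcases hcase with rfl | rfl
          · exact Iff.rfl
          · exact hinvmem X hX1 x
        have e2 : x ∈ Y ↔ h ∈ Y := by
          rcases hcase with rfl | rfl
          · exact Iff.rfl
          · exact hinvmem Y hY1 x
        rw [e1, e2]
        constructor
        · intro hx
          have : h ∈ X ∩ S := Finset.mem_inter.mpr ⟨hx, hhS⟩
          rw [hXY] at this
          exact (Finset.mem_inter.mp this).1
        · intro hx
          have : h ∈ Y ∩ S := Finset.mem_inter.mpr ⟨hx, hhS⟩
          rw [← hXY] at this
          exact (Finset.mem_inter.mp this).1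
      · obtain ⟨r, hrR, hxCr⟩ := hrep x hxN
        have hrS : r ∈ S := Finset.mem_union_right _ hrR
        simp only [hC, mem_image, mem_range] at hxCr
        obtain ⟨k, hk, hkx⟩ := hxCr
        have e1 : x ∈ X ↔ r ∈ X := by rw [← hkx]; exact (hαmem X hX2 k r).symm
        have e2 : x ∈ Y ↔ r ∈ Y := by rw [← hkx]; exact (hαmem Y hY2 k r).symm
        rw [e1, e2]
        constructor
        · intro hx
          have : r ∈ X ∩ S := Finset.mem_inter.mpr ⟨hx, hrS⟩
          rw [hXY] at this
          exact (Finset.mem_inter.mp this).1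
        · intro hx
          have : r ∈ Y ∩ S := Finset.mem_inter.mpr ⟨hx, hrS⟩
          rw [← hXY] at this
          exact (Finset.mem_inter.mp this).1
  -- counting
  have hpows : S.powerset.card = 2 ^ (HN.card + R'.card) := by
    rw [Finset.card_powerset, hScard]
  have hNcard : Nfin.card = Nat.card N := by
    rw [Nat.card_eq_fintype_card, hNfin]
    rw [Fintype.card_subtype]
  have hTcard : Fintype.card T = 2 * Nat.card N := by
    have h := Subgroup.index_mul_card (H := N)
    rw [hN, Nat.card_eq_fintype_card (α := T)] at h
    omega
  have hsplit : Nfin.card + Γfin.card = Fintype.card T := by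
    rw [hNfin, hΓfin, Finset.card_filter_add_card_filter_not, Finset.card_univ]
  have hfinal : F.card ≤ 2 ^ (HN.card + R'.card) := hmain.trans_eq hpows
  calc (F.card : ℝ) ≤ ((2 ^ (HN.card + R'.card) : ℕ) : ℝ) := by exact_mod_cast hfinal
    _ = (2 : ℝ) ^ (((HN.card + R'.card : ℕ) : ℝ)) := by
        rw [Real.rpow_natCast]; push_cast; ring
    _ ≤ 2 ^ (((Fintype.card T : ℝ) +
            ((Finset.univ.filter (fun x : T => x ^ 2 = 1)).card : ℝ)) / 2
           - (Nat.card N : ℝ) / 6) := by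
        apply Real.rpow_le_rpow_of_exponent_le one_le_two
        have c1 : (2 : ℝ) * HN.card ≤ Nfin.card + Ifin.card := by exact_mod_cast hHNcard
        have c2 : (3 : ℝ) * R'.card ≤ Γfin.card := by exact_mod_cast hR'card
        have c3 : (Nfin.card : ℝ) + Γfin.card = Fintype.card T := by exact_mod_cast hsplit
        have c4 : (Fintype.card T : ℝ) = 2 * Nat.card N := by exact_mod_cast hTcard
        have c5 : (Nfin.card : ℝ) = Nat.card N := by exact_mod_cast hNcard
        have hIe : ((Finset.univ.filter (fun x : T => x ^ 2 = 1)).card : ℝ)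
            = (Ifin.card : ℝ) := by rw [hIfin]
        rw [hIe]
        push_cast
        linarith
end
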